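/- For positive integers a, d with a, d ≥ 2, ζ_{sl(4)}(a,0,1,d,0,1) = ζ_{sl(4)}(0,a,1,d,0,1), and moreover ζ_{sl(4)}(a,0,1,d,0,1) = ζ_{sl(4)}(a,0,1,0,0,d+1) + ∑_{i=1}^{d} ζ(d+2−i, i, a), where ζ(s₁,s₂,s₃) is the triple Euler sum over n₁ > n₂ > n₃ ≥ 1. -/

import Mathlib

noncomputable def wittenSl4 (a b c d e f : ℕ) : ℝ :=
  ∑' (n₁ : ℕ) (n₂ : ℕ) (n₃ : ℕ),
    1 / ((n₁ + 1 : ℝ) ^ a * (n₂ + 1 : ℝ) ^ b * (n₃ + 1 : ℝ) ^ c *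
      (n₁ + n₂ + 2 : ℝ) ^ d * (n₂ + n₃ + 2 : ℝ) ^ e * (n₁ + n₂ + n₃ + 3 : ℝ) ^ f)

noncomputable def tripleZeta (s₁ s₂ s₃ : ℕ) : ℝ :=
  ∑' (n : ℕ) (j : ℕ) (k : ℕ),
    1 / ((n + j + k + 3 : ℝ) ^ s₁ * (n + j + 2 : ℝ) ^ s₂ * (n + 1 : ℝ) ^ s₃)

/-! ### Auxiliary machinery -/

private lemma pf_aux (m y : ℝ) (hm : 0 < m) (hy : 0 < y) :
    ∀ d : ℕ, 1 / (y * m ^ d * (m + y)) =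
      1 / (y * (m + y) ^ (d + 1)) +
        ∑ j ∈ Finset.range d, 1 / ((m + y) ^ (d + 1 - j) * m ^ (j + 1))
  | 0 => by simp
  | (e + 1) => by
    have hmy : (0:ℝ) < m + y := by linarith
    have hm' := hm.ne'
    have hy' := hy.ne'
    have hmy' := hmy.ne'
    have IH := pf_aux m y hm hy e
    rw [Finset.sum_range_succ']
    have e1 : ∀ i ∈ Finset.range e,
        (1:ℝ) / ((m + y) ^ (e + 1 + 1 - (i + 1)) * m ^ (i + 1 + 1)) =
          1 / ((m + y) ^ (e + 1 - i) * m ^ (i + 1)) * (1 / m) := by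
      intro i hi
      have h2 : e + 1 + 1 - (i + 1) = e + 1 - i := by omega
      rw [h2, pow_succ]
      ring
    rw [Finset.sum_congr rfl e1, ← Finset.sum_mul]
    have hS : ∑ j ∈ Finset.range e, (1:ℝ) / ((m + y) ^ (e + 1 - j) * m ^ (j + 1)) =
        1 / (y * m ^ e * (m + y)) - 1 / (y * (m + y) ^ (e + 1)) := by
      linarith [IH]
    rw [hS]
    simp only [Nat.sub_zero, pow_zero, pow_one]
    field_simp
    ring

private lemma pointwise_pf (aa dd : ℕ) (x m y N : ℝ) (hx : 0 < x) (hm : 0 < m) (hy : 0 < y)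
    (hN : N = m + y) :
    1 / (x ^ aa * y * m ^ dd * N) =
      1 / (x ^ aa * y * N ^ (dd + 1)) +
        ∑ j ∈ Finset.range dd, 1 / (N ^ (dd + 1 - j) * m ^ (j + 1) * x ^ aa) := by
  subst hN
  have h := pf_aux m y hm hy dd
  have hx' : (0:ℝ) < x ^ aa := pow_pos hx aa
  have e0 : (1:ℝ) / (x ^ aa * y * m ^ dd * (m + y)) =
      1 / (y * m ^ dd * (m + y)) * (1 / x ^ aa) := by
    rw [div_mul_div_comm, one_mul]
    congr 1
    ring
  rw [e0, h, add_mul, Finset.sum_mul]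
  congr 1
  · rw [div_mul_div_comm, one_mul]
    congr 1
    ring
  · refine Finset.sum_congr rfl fun i _ => ?_
    rw [div_mul_div_comm, one_mul]

private lemma triple_bridge (g : ℕ → ℕ → ℕ → ℝ) (hg : ∀ i j k, 0 ≤ g i j k)
    (hfin : (∑' (i : ℕ) (j : ℕ) (k : ℕ), ENNReal.ofReal (g i j k)) ≠ ⊤) :
    ∑' (i : ℕ) (j : ℕ) (k : ℕ), g i j k =
      (∑' (i : ℕ) (j : ℕ) (k : ℕ), ENNReal.ofReal (g i j k)).toReal := by
  have h2 : ∀ i, (∑' (j : ℕ) (k : ℕ), ENNReal.ofReal (g i j k)) ≠ ⊤ :=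
    fun i => ne_top_of_le_ne_top hfin (ENNReal.le_tsum i)
  have h3 : ∀ i j, (∑' (k : ℕ), ENNReal.ofReal (g i j k)) ≠ ⊤ :=
    fun i j => ne_top_of_le_ne_top (h2 i) (ENNReal.le_tsum j)
  rw [ENNReal.tsum_toReal_eq h2]
  refine tsum_congr fun i => ?_
  rw [ENNReal.tsum_toReal_eq (h3 i)]
  refine tsum_congr fun j => ?_
  rw [ENNReal.tsum_toReal_eq (fun k => ENNReal.ofReal_ne_top)]
  exact tsum_congr fun k => (ENNReal.toReal_ofReal (hg i j k)).symm

private lemma sumsq_ne_top : (∑' n : ℕ, ENNReal.ofReal (1 / ((n : ℝ) + 1) ^ 2)) ≠ ⊤ := by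
  have hs : Summable (fun n : ℕ => 1 / ((n : ℝ) + 1) ^ 2) := by
    have h2 : Summable (fun n : ℕ => 1 / ((n : ℝ)) ^ 2) :=
      Real.summable_one_div_nat_pow.mpr one_lt_two
    have := (summable_nat_add_iff 1).mpr h2
    refine this.congr fun n => ?_
    push_cast
    ring_nf
  rw [← ENNReal.ofReal_tsum_of_nonneg (fun n => by positivity) hs]
  exact ENNReal.ofReal_ne_top

private lemma step_sum (A B : ℕ → ENNReal) (s : Finset ℕ) (C : ℕ → ℕ → ENNReal)
    (h : ∀ n, A n = B n + ∑ j ∈ s, C j n) :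
    ∑' n, A n = ∑' n, B n + ∑ j ∈ s, ∑' n, C j n := by
  rw [tsum_congr h, ENNReal.tsum_add, Summable.tsum_finsetSum fun i _ => ENNReal.summable]

/-- The real-valued summand of `wittenSl4`. -/
noncomputable def WB (p q r s t u : ℕ) (n₁ n₂ n₃ : ℕ) : ℝ :=
  1 / ((n₁ + 1 : ℝ) ^ p * (n₂ + 1 : ℝ) ^ q * (n₃ + 1 : ℝ) ^ r *
      (n₁ + n₂ + 2 : ℝ) ^ s * (n₂ + n₃ + 2 : ℝ) ^ t * (n₁ + n₂ + n₃ + 3 : ℝ) ^ u)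

/-- The real-valued summand of `tripleZeta`. -/
noncomputable def TB (s₁ s₂ s₃ : ℕ) (n j k : ℕ) : ℝ :=
  1 / ((n + j + k + 3 : ℝ) ^ s₁ * (n + j + 2 : ℝ) ^ s₂ * (n + 1 : ℝ) ^ s₃)

noncomputable def WE (p q r s t u : ℕ) : ENNReal :=
  ∑' (n₁ : ℕ) (n₂ : ℕ) (n₃ : ℕ), ENNReal.ofReal (WB p q r s t u n₁ n₂ n₃)

noncomputable def TE (s₁ s₂ s₃ : ℕ) : ENNReal :=
  ∑' (n : ℕ) (j : ℕ) (k : ℕ), ENNReal.ofReal (TB s₁ s₂ s₃ n j k)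

private lemma WB_nonneg (p q r s t u n₁ n₂ n₃ : ℕ) : 0 ≤ WB p q r s t u n₁ n₂ n₃ := by
  unfold WB; positivity

private lemma TB_nonneg (s₁ s₂ s₃ n j k : ℕ) : 0 ≤ TB s₁ s₂ s₃ n j k := by
  unfold TB; positivity

private lemma wittenSl4_eq (p q r s t u : ℕ) (h : WE p q r s t u ≠ ⊤) :
    wittenSl4 p q r s t u = (WE p q r s t u).toReal :=
  triple_bridge (WB p q r s t u) (WB_nonneg p q r s t u) h

private lemma tripleZeta_eq (s₁ s₂ s₃ : ℕ) (h : TE s₁ s₂ s₃ ≠ ⊤) :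
    tripleZeta s₁ s₂ s₃ = (TE s₁ s₂ s₃).toReal :=
  triple_bridge (TB s₁ s₂ s₃) (TB_nonneg s₁ s₂ s₃) h

private lemma WE_fin (a d : ℕ) (ha : 2 ≤ a) (hd : 2 ≤ d) : WE a 0 1 d 0 1 ≠ ⊤ := by
  set A : ℕ → ENNReal := fun n => ENNReal.ofReal (1 / ((n : ℝ) + 1) ^ 2) with hA
  have bound : ∀ n₁ n₂ n₃ : ℕ,
      ENNReal.ofReal (WB a 0 1 d 0 1 n₁ n₂ n₃) ≤ A n₁ * A n₂ * A n₃ := by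
    intro n₁ n₂ n₃
    rw [hA]
    rw [← ENNReal.ofReal_mul (by positivity), ← ENNReal.ofReal_mul (by positivity)]
    apply ENNReal.ofReal_le_ofReal
    have h1 : (0:ℝ) ≤ (n₁ : ℝ) := Nat.cast_nonneg n₁
    have h2 : (0:ℝ) ≤ (n₂ : ℝ) := Nat.cast_nonneg n₂
    have h3 : (0:ℝ) ≤ (n₃ : ℝ) := Nat.cast_nonneg n₃
    have c1 : ((n₁:ℝ) + 1) ^ 2 ≤ ((n₁:ℝ) + 1) ^ a :=
      pow_le_pow_right₀ (by linarith) ha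
    have c2 : ((n₂:ℝ) + 1) ^ 2 ≤ ((n₁:ℝ) + (n₂:ℝ) + 2) ^ d :=
      le_trans (pow_le_pow_left₀ (by linarith) (by linarith) 2)
        (pow_le_pow_right₀ (by linarith) hd)
    have c3 : ((n₃:ℝ) + 1) ^ 2 ≤ ((n₃:ℝ) + 1) * ((n₁:ℝ) + (n₂:ℝ) + (n₃:ℝ) + 3) := by
      rw [sq]
      exact mul_le_mul_of_nonneg_left (by linarith) (by linarith)
    have cP : ((n₁:ℝ) + 1) ^ 2 * ((n₂:ℝ) + 1) ^ 2 * ((n₃:ℝ) + 1) ^ 2 ≤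
        ((n₁:ℝ) + 1) ^ a * ((n₁:ℝ) + (n₂:ℝ) + 2) ^ d *
          (((n₃:ℝ) + 1) * ((n₁:ℝ) + (n₂:ℝ) + (n₃:ℝ) + 3)) :=
      mul_le_mul (mul_le_mul c1 c2 (by positivity) (by positivity)) c3
        (by positivity) (by positivity)
    unfold WB
    simp only [pow_zero, pow_one, one_mul, mul_one]
    rw [div_mul_div_comm, div_mul_div_comm]
    simp only [one_mul]
    apply one_div_le_one_div_of_le (by positivity)
    calc ((n₁:ℝ) + 1) ^ 2 * ((n₂:ℝ) + 1) ^ 2 * ((n₃:ℝ) + 1) ^ 2 ≤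
        ((n₁:ℝ) + 1) ^ a * ((n₁:ℝ) + (n₂:ℝ) + 2) ^ d *
          (((n₃:ℝ) + 1) * ((n₁:ℝ) + (n₂:ℝ) + (n₃:ℝ) + 3)) := cP
      _ = ((n₁:ℝ) + 1) ^ a * ((n₃:ℝ) + 1) * ((n₁:ℝ) + (n₂:ℝ) + 2) ^ d *
          ((n₁:ℝ) + (n₂:ℝ) + (n₃:ℝ) + 3) := by ring
  have hle : WE a 0 1 d 0 1 ≤ (∑' n, A n) * (∑' n, A n) * (∑' n, A n) := by
    unfold WE
    calc ∑' (n₁ : ℕ) (n₂ : ℕ) (n₃ : ℕ), ENNReal.ofReal (WB a 0 1 d 0 1 n₁ n₂ n₃)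
        ≤ ∑' (n₁ : ℕ) (n₂ : ℕ) (n₃ : ℕ), A n₁ * A n₂ * A n₃ :=
          ENNReal.tsum_le_tsum fun n₁ => ENNReal.tsum_le_tsum fun n₂ =>
            ENNReal.tsum_le_tsum fun n₃ => bound n₁ n₂ n₃
      _ = (∑' n, A n) * (∑' n, A n) * (∑' n, A n) := by
          simp only [ENNReal.tsum_mul_left, ENNReal.tsum_mul_right]
  exact ne_top_of_le_ne_top
    (ENNReal.mul_ne_top (ENNReal.mul_ne_top sumsq_ne_top sumsq_ne_top) sumsq_ne_top) hle

private lemma WE_comm (a d : ℕ) : WE a 0 1 d 0 1 = WE 0 a 1 d 0 1 := by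
  unfold WE
  rw [ENNReal.tsum_comm]
  refine tsum_congr fun n₁ => tsum_congr fun n₂ => tsum_congr fun n₃ => congrArg _ ?_
  unfold WB
  simp only [pow_zero, pow_one, one_mul, mul_one]
  congr 1
  ring

private lemma WE_split (a d : ℕ) :
    WE a 0 1 d 0 1 = WE a 0 1 0 0 (d + 1) + ∑ j ∈ Finset.range d, TE (d + 1 - j) (j + 1) a := by
  unfold WE TE
  refine step_sum _ _ _ _ fun n₁ => ?_
  refine step_sum _ _ _ _ fun n₂ => ?_
  refine step_sum _ _ _ _ fun n₃ => ?_
  rw [← ENNReal.ofReal_sum_of_nonneg (fun i _ => TB_nonneg _ _ _ _ _ _),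
    ← ENNReal.ofReal_add (WB_nonneg _ _ _ _ _ _ _ _ _) (Finset.sum_nonneg fun i _ => TB_nonneg _ _ _ _ _ _)]
  refine congrArg _ ?_
  unfold WB TB
  simp only [pow_zero, pow_one, one_mul, mul_one]
  exact pointwise_pf a d ((n₁:ℝ) + 1) ((n₁:ℝ) + (n₂:ℝ) + 2) ((n₃:ℝ) + 1)
    ((n₁:ℝ) + (n₂:ℝ) + (n₃:ℝ) + 3) (by positivity) (by positivity) (by positivity) (by ring)

theorem wittenSl4_a01d01 (a d : ℕ) (ha : 2 ≤ a) (hd : 2 ≤ d) :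
    wittenSl4 a 0 1 d 0 1 = wittenSl4 0 a 1 d 0 1 ∧
    wittenSl4 a 0 1 d 0 1 =
      wittenSl4 a 0 1 0 0 (d + 1) +
        ∑ i ∈ Finset.Icc 1 d, tripleZeta (d + 2 - i) i a := by
  have hfinL : WE a 0 1 d 0 1 ≠ ⊤ := WE_fin a d ha hd
  have hsplit := WE_split a d
  have htot : WE a 0 1 0 0 (d + 1) + ∑ j ∈ Finset.range d, TE (d + 1 - j) (j + 1) a ≠ ⊤ :=
    hsplit ▸ hfinL
  have h0 : WE a 0 1 0 0 (d + 1) ≠ ⊤ := (ENNReal.add_ne_top.mp htot).1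
  have hsumfin : ∑ j ∈ Finset.range d, TE (d + 1 - j) (j + 1) a ≠ ⊤ :=
    (ENNReal.add_ne_top.mp htot).2
  have hj : ∀ j ∈ Finset.range d, TE (d + 1 - j) (j + 1) a ≠ ⊤ := by
    intro j hjmem
    exact ne_top_of_le_ne_top hsumfin (Finset.single_le_sum (f := fun j => TE (d + 1 - j) (j + 1) a) (fun i _ => zero_le) hjmem)
  constructor
  · rw [wittenSl4_eq a 0 1 d 0 1 hfinL, wittenSl4_eq 0 a 1 d 0 1 ((WE_comm a d) ▸ hfinL),
      WE_comm a d]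
  · have hIcc : ∑ i ∈ Finset.Icc 1 d, tripleZeta (d + 2 - i) i a =
        ∑ j ∈ Finset.range d, tripleZeta (d + 1 - j) (j + 1) a := by
      rw [← Finset.Ico_add_one_right_eq_Icc, Finset.sum_Ico_eq_sum_range]
      refine Finset.sum_congr rfl fun i _ => ?_
      have h2 : d + 2 - (1 + i) = d + 1 - i := by omega
      rw [h2, add_comm 1 i]
    rw [hIcc, wittenSl4_eq a 0 1 d 0 1 hfinL, wittenSl4_eq a 0 1 0 0 (d + 1) h0, hsplit,
      ENNReal.toReal_add h0 hsumfin, ENNReal.toReal_sum hj]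
    refine congrArg _ (Finset.sum_congr rfl fun j hjm => ?_)
    exact (tripleZeta_eq _ _ _ (hj j hjm)).symm
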